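/- arXiv:2205.09033 — 2 statements merged into one kernel-verified Lean document; each statement's English description precedes it below -/
import Mathlib

section
/- The sequence Γ_n = (∑_{k=1}^n 1/k) − log(n + 1/2) is strictly monotone decreasing in n (for n ≥ 1). -/
lemma log_key_aux {x : ℝ} (hx0 : 0 < x) (hx1 : x < 1) :
    2 * x < Real.log (1 + x) - Real.log (1 - x) := by
  have hmono : StrictMonoOn (fun y : ℝ => Real.log (1 + y) - Real.log (1 - y) - 2 * y)
      (Set.Ico 0 1) := by
    apply strictMonoOn_of_deriv_pos (convex_Ico 0 1)
    · apply ContinuousOn.sub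
      apply ContinuousOn.sub
      · intro y hy
        simp only [Set.mem_Ico] at hy
        exact ((Real.continuousAt_log (by intro h; have h' : (1:ℝ) + y = 0 := h; linarith [hy.1, hy.2])).comp
          (continuous_const.add continuous_id).continuousAt).continuousWithinAt
      · intro y hy
        simp only [Set.mem_Ico] at hy
        exact ((Real.continuousAt_log (by intro h; have h' : (1:ℝ) - y = 0 := h; linarith [hy.1, hy.2])).comp
          (continuous_const.sub continuous_id).continuousAt).continuousWithinAt
      · exact (continuous_const.mul continuous_id).continuousOn
    · intro y hy
      rw [interior_Ico] at hy
      obtain ⟨hy0, hy1⟩ := hy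
      have h1 : HasDerivAt (fun y : ℝ => Real.log (1 + y)) (1 / (1 + y)) y := by
        have := (Real.hasDerivAt_log (by linarith : (1:ℝ) + y ≠ 0)).comp y
          ((hasDerivAt_id y).const_add 1)
        simpa [Function.comp_def] using this
      have h2 : HasDerivAt (fun y : ℝ => Real.log (1 - y)) (-(1 / (1 - y))) y := by
        have := (Real.hasDerivAt_log (by linarith : (1:ℝ) - y ≠ 0)).comp y
          ((hasDerivAt_id y).const_sub 1)
        simpa [Function.comp_def] using this
      have h3 : HasDerivAt (fun y : ℝ => 2 * y) 2 y := by
        simpa using (hasDerivAt_id y).const_mul 2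
      have hf : HasDerivAt (fun y : ℝ => Real.log (1 + y) - Real.log (1 - y) - 2 * y)
          (1 / (1 + y) - -(1 / (1 - y)) - 2) y := (h1.sub h2).sub h3
      rw [hf.deriv]
      have ha : (1:ℝ) + y ≠ 0 := by linarith
      have hb : (1:ℝ) - y ≠ 0 := by linarith
      have heq : 1 / (1 + y) - -(1 / (1 - y)) - 2 = 2 * y ^ 2 / ((1 + y) * (1 - y)) := by
        field_simp
        ring
      rw [heq]
      exact div_pos (by positivity) (by nlinarith)
  have h0 : (0 : ℝ) ∈ Set.Ico (0:ℝ) 1 := by constructor <;> norm_num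
  have hx : x ∈ Set.Ico (0:ℝ) 1 := ⟨le_of_lt hx0, hx1⟩
  have := hmono h0 hx hx0
  simp only [add_zero, sub_zero, Real.log_one, mul_zero] at this
  linarith

theorem Gamma_seq_strict_anti (n : ℕ) (hn : 1 ≤ n) :
    (∑ k ∈ Finset.Icc 1 (n + 1), (1 : ℝ) / k) - Real.log (n + 1 + 1 / 2) <
      (∑ k ∈ Finset.Icc 1 n, (1 : ℝ) / k) - Real.log (n + 1 / 2) := by
  have hn1 : (1:ℝ) ≤ (n:ℝ) := by exact_mod_cast hn
  rw [Finset.sum_Icc_succ_top (by omega : 1 ≤ n + 1)]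
  have hN0 : 0 < (n:ℝ) + 1 := by linarith
  have e1 : (n:ℝ) + 1 + 1 / 2 = ((n:ℝ) + 1) * (1 + 1 / (2 * ((n:ℝ) + 1))) := by
    field_simp
  have e2 : (n:ℝ) + 1 / 2 = ((n:ℝ) + 1) * (1 - 1 / (2 * ((n:ℝ) + 1))) := by
    field_simp
    ring
  set N : ℝ := (n:ℝ) + 1 with hNdef
  have hu0 : 0 < 1 / (2 * N) := by positivity
  have hu1 : 1 / (2 * N) < 1 := by
    rw [div_lt_one (by linarith)]; linarith
  have hkey := log_key_aux hu0 hu1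
  rw [e1, e2, Real.log_mul (by linarith) (by linarith),
      Real.log_mul (by linarith) (by linarith)]
  have hcast : ((n + 1 : ℕ) : ℝ) = N := by push_cast; rfl
  rw [hcast]
  have h2u : 2 * (1 / (2 * N)) = 1 / N := by field_simp
  linarith
end

section
/- For every positive integer n, one has log(n + 1/2) < 1 + 1/3 + 1/4 + ⋯ + 1/n, i.e. log(n + 1/2) < (∑_{k=1}^n 1/k) − 1/2; equivalently, the sequence Γ_n = (∑_{k=1}^n 1/k) − log(n + 1/2) satisfies Γ_n > 1/2 for every positive integer n. -/
open Finset

private lemma log_ratio_le (x : ℝ) (hx : 0 ≤ x) (hx1 : x < 1) :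
    Real.log (1 + x) - Real.log (1 - x) ≤ 2 * x + 2 * (x ^ 3 / (1 - x)) := by
  have habs : |x| < 1 := by rw [abs_of_nonneg hx]; exact hx1
  have habs' : |(-x)| < 1 := by rwa [abs_neg]
  have h1 := Real.abs_log_sub_add_sum_range_le habs 2
  have h2 := Real.abs_log_sub_add_sum_range_le habs' 2
  rw [abs_of_nonneg hx] at h1
  rw [abs_neg, abs_of_nonneg hx, sub_neg_eq_add] at h2
  simp only [Finset.sum_range_succ, Finset.sum_range_zero] at h1 h2
  norm_num at h1 h2
  have b1 := neg_le_of_abs_le h1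
  have b2 := le_of_abs_le h2
  linarith

private lemma log_step (x : ℝ) (hx : 2 ≤ x) :
    Real.log (x + 1 / 2) - Real.log (x - 1 / 2) ≤
      1 / x + 7 / (25 * (x - 1) * x * (x + 1)) := by
  have hx0 : (0 : ℝ) < x := by linarith
  set t : ℝ := 1 / (2 * x) with ht
  have ht0 : 0 < t := by rw [ht]; positivity
  have ht4 : t ≤ 1 / 4 := by
    rw [ht, div_le_div_iff₀ (by linarith) (by norm_num)]
    linarith
  have ht1 : t < 1 := by linarith
  have e1 : x + 1 / 2 = x * (1 + t) := by rw [ht]; field_simp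
  have e2 : x - 1 / 2 = x * (1 - t) := by rw [ht]; field_simp
  have l1 : Real.log (x + 1 / 2) = Real.log x + Real.log (1 + t) := by
    rw [e1, Real.log_mul (ne_of_gt hx0) (by positivity)]
  have l2 : Real.log (x - 1 / 2) = Real.log x + Real.log (1 - t) := by
    rw [e2, Real.log_mul (ne_of_gt hx0) (by linarith : (0:ℝ) < 1 - t).ne']
  rw [l1, l2]
  have key := log_ratio_le t (le_of_lt ht0) ht1
  have h2t : 2 * t = 1 / x := by rw [ht]; field_simp
  have hq : 2 * (t ^ 3 / (1 - t)) = 1 / (2 * x ^ 2 * (2 * x - 1)) := by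
    rw [ht]
    have hne : (2 * x - 1) ≠ 0 := by nlinarith
    have hne2 : (1 : ℝ) - 1 / (2 * x) ≠ 0 := by
      rw [show (1 : ℝ) - 1 / (2 * x) = (2 * x - 1) / (2 * x) by field_simp]
      positivity
    field_simp
  have hle : 1 / (2 * x ^ 2 * (2 * x - 1)) ≤ 7 / (25 * (x - 1) * x * (x + 1)) := by
    rw [div_le_div_iff₀ (by nlinarith) (by nlinarith)]
    nlinarith [sq_nonneg (x - 3), hx0]
  linarith

private lemma log_three_halves_lt : Real.log (3 / 2) < 43 / 100 := by
  have habs : |(1 / 3 : ℝ)| < 1 := by rw [abs_of_nonneg (by norm_num)]; norm_num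
  have h := Real.abs_log_sub_add_sum_range_le habs 4
  rw [abs_of_nonneg (by norm_num : (0:ℝ) ≤ 1/3)] at h
  simp only [Finset.sum_range_succ, Finset.sum_range_zero] at h
  have hlog : Real.log (1 - 1 / 3) = -Real.log (3 / 2) := by
    rw [show (1 : ℝ) - 1 / 3 = (3 / 2)⁻¹ by norm_num, Real.log_inv]
  rw [hlog] at h
  have hb := neg_le_of_abs_le h
  norm_num at hb
  linarith

private lemma gamma_lower (n : ℕ) (hn : 1 ≤ n) :
    (∑ k ∈ Finset.Icc 1 n, (1 : ℝ) / k) - 1 / 2 - Real.log (n + 1 / 2) ≥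
      43 / 100 - Real.log (3 / 2) + (7 / 50) * (1 / (n * (n + 1))) := by
  induction n with
  | zero => omega
  | succ m ih =>
    rcases Nat.eq_or_lt_of_le hn with h1 | h1
    · -- base case m + 1 = 1
      have hm : m = 0 := by omega
      subst hm
      simp only [Finset.Icc_self, Finset.sum_singleton]
      norm_num
      linarith
    · -- inductive step: m ≥ 1
      have hm : 1 ≤ m := by omega
      have ihm := ih hm
      have hsum : (∑ k ∈ Finset.Icc 1 (m + 1), (1 : ℝ) / k) =
          (∑ k ∈ Finset.Icc 1 m, (1 : ℝ) / k) + 1 / ((m : ℝ) + 1) := by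
        rw [Finset.sum_Icc_succ_top (by omega : 1 ≤ m + 1)]
        push_cast
        ring
      have hstep := log_step ((m : ℝ) + 1) (by exact_mod_cast Nat.succ_le_succ hm)
      have hm' : (1 : ℝ) ≤ (m : ℝ) := by exact_mod_cast hm
      have e2 : ((m : ℝ) + 1) - 1 / 2 = (m : ℝ) + 1 / 2 := by ring
      rw [e2] at hstep
      have hb : 7 / (25 * ((m : ℝ) + 1 - 1) * ((m : ℝ) + 1) * ((m : ℝ) + 1 + 1)) =
          (7 / 50) * (1 / ((m : ℝ) * ((m : ℝ) + 1)))
          - (7 / 50) * (1 / (((m : ℝ) + 1) * ((m : ℝ) + 1 + 1))) := by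
        have hp1 : (0 : ℝ) < (m : ℝ) := by linarith
        field_simp
        ring_nf; field_simp
      rw [hsum]
      push_cast at hstep ⊢
      linarith

theorem log_half_shift_lt_harmonic (n : ℕ) (hn : 1 ≤ n) :
    Real.log (n + 1 / 2) < (∑ k ∈ Finset.Icc 1 n, (1 : ℝ) / k) - 1 / 2 := by
  have h := gamma_lower n hn
  have h2 := log_three_halves_lt
  have hpos : (0 : ℝ) < (7 / 50) * (1 / (n * (n + 1))) := by
    have h1 : (1 : ℝ) ≤ (n : ℝ) := by exact_mod_cast hn
    positivity
  linarith
end
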